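/- Let A be a free abelian group of finite rank m ≥ 1 (A ≅ ℤ^m), let x ∈ A be a nonzero element, and let τ : A → ℝ be a group homomorphism with τ(x) = 1. Then there exists a positive cone P of a left ordering of A such that x is cofinal in A with respect to P (for every a ∈ A there is N ≥ 1 with x^{-N} <_P a <_P x^N) and such that the stable map satisfies ρ̄_{x,P}(a) = τ(a) for every a ∈ A. (This is the abelian case of the computation of the image of ψ_x: every class [τ] with τ(x)=1 is realized by a left ordering.) -/

import Mathlib

open Filter Topology

/-- A subset `P ⊆ G` is the positive cone of a left ordering: `P·P ⊆ P` and
`G = P ⊔ P⁻¹ ⊔ {1}`. -/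
def IsPosCone {G : Type*} [Group G] (P : Set G) : Prop :=
  (∀ a ∈ P, ∀ b ∈ P, a * b ∈ P) ∧
  (∀ g : G, g ∈ P ∨ g⁻¹ ∈ P ∨ g = 1) ∧
  (∀ g : G, g ∈ P → g⁻¹ ∉ P) ∧
  (1 : G) ∉ P

/-- The left-invariant order determined by a positive cone: `a <_P b` iff `a⁻¹ b ∈ P`. -/
def ltC {G : Type*} [Group G] (P : Set G) (a b : G) : Prop := a⁻¹ * b ∈ P

/-- The non-strict order determined by a positive cone. -/
def leC {G : Type*} [Group G] (P : Set G) (a b : G) : Prop := ltC P a b ∨ a = b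

/-- Let `A` be a free abelian group of rank `m ≥ 1`, `x ∈ A` nonzero, and
`τ : A → ℝ` a homomorphism with `τ(x) = 1`. Then there is a left ordering `P` of `A` such
that `x` is cofinal in `A` and the stable map `ρ̄_{x,P}` equals `τ`. -/
theorem exists_ordering_realizing_homomorphism {A : Type*} [CommGroup A]
    (m : ℕ) (hm : 1 ≤ m) (eA : A ≃* Multiplicative (Fin m → ℤ))
    (x : A) (hx : x ≠ 1)
    (τ : A → ℝ) (hτ : ∀ a b : A, τ (a * b) = τ a + τ b) (hτx : τ x = 1) :
    ∃ (P : Set A) (ρ : A → ℤ), IsPosCone P ∧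
      (∀ a : A, ∃ N : ℕ, 1 ≤ N ∧ ltC P (x ^ (-(N : ℤ))) a ∧ ltC P a (x ^ (N : ℤ))) ∧
      (ltC P 1 x → ∀ a : A, leC P (x ^ ρ a) a ∧ ltC P a (x ^ (ρ a + 1))) ∧
      (ltC P x 1 → ∀ a : A, ltC P (x ^ (-(ρ a) - 1)) a ∧ leC P a (x ^ (-(ρ a)))) ∧
      (∀ a : A, Tendsto (fun N : ℕ => (ρ (a ^ N) : ℝ) / N) atTop (𝓝 (τ a))) := by
  classical
  set f : A → ℝ ×ₗ Lex (Fin m → ℤ) :=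
    fun a => toLex (τ a, toLex (Multiplicative.toAdd (eA a))) with hfdef
  have hτ1 : τ 1 = 0 := by have := hτ 1 1; simp at this; linarith
  have hf_add : ∀ a b : A, f (a * b) = f a + f b := by
    intro a b
    show toLex (τ (a * b), toLex (Multiplicative.toAdd (eA (a * b)))) =
      toLex (τ a, toLex (Multiplicative.toAdd (eA a))) +
      toLex (τ b, toLex (Multiplicative.toAdd (eA b)))
    rw [hτ a b, map_mul]
    rfl
  have hf_zero : f 1 = 0 := by
    show toLex (τ 1, toLex (Multiplicative.toAdd (eA 1))) = 0
    rw [hτ1, map_one]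
    rfl
  have hf_inv : ∀ a : A, f a⁻¹ = -f a := by
    intro a
    have h : f a⁻¹ + f a = 0 := by rw [add_comm, ← hf_add, mul_inv_cancel, hf_zero]
    exact eq_neg_of_add_eq_zero_left h
  have hf_eq_zero : ∀ a : A, f a = 0 → a = 1 := by
    intro a h
    have h2 : toLex (Multiplicative.toAdd (eA a)) = (0 : Lex (Fin m → ℤ)) :=
      congrArg (fun v => (ofLex v).2) h
    have h3 : Multiplicative.toAdd (eA a) = 0 := congrArg ofLex h2
    have h4 : eA a = 1 := by simpa using h3
    apply eA.injective
    rw [h4, map_one]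
  have hf_inj : ∀ a b : A, f a = f b → a = b := by
    intro a b h
    have h1 : f (a⁻¹ * b) = 0 := by rw [hf_add, hf_inv, h]; exact neg_add_cancel _
    exact inv_mul_eq_one.mp (hf_eq_zero _ h1)
  set P : Set A := {a | (0 : ℝ ×ₗ Lex (Fin m → ℤ)) < f a} with hPdef
  have hmem : ∀ a : A, a ∈ P ↔ (0 : ℝ ×ₗ Lex (Fin m → ℤ)) < f a := fun a => Iff.rfl
  have hlt : ∀ a b : A, ltC P a b ↔ f a < f b := by
    intro a b
    show (0 : ℝ ×ₗ Lex (Fin m → ℤ)) < f (a⁻¹ * b) ↔ f a < f b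
    rw [hf_add, hf_inv, ← sub_eq_neg_add, sub_pos]
  have hmono : ∀ a b : A, τ a < τ b → f a < f b := by
    intro a b h
    exact Prod.Lex.lt_iff.2 (Or.inl h)
  -- powers of τ
  have hτpowN : ∀ a : A, ∀ n : ℕ, τ (a ^ n) = n * τ a := by
    intro a n
    induction n with
    | zero => simpa using hτ1
    | succ k ih => rw [pow_succ, hτ, ih]; push_cast; ring
  have hτinv : ∀ a : A, τ a⁻¹ = -τ a := by
    intro a
    have h := hτ a a⁻¹
    rw [mul_inv_cancel, hτ1] at h
    linarith
  have hτpow : ∀ a : A, ∀ n : ℤ, τ (a ^ n) = n * τ a := by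
    intro a n
    cases n with
    | ofNat k => rw [Int.ofNat_eq_coe, zpow_natCast, hτpowN]; push_cast; ring
    | negSucc k => rw [zpow_negSucc, hτinv, hτpowN]; push_cast; ring
  set ρ : A → ℤ := fun a => if f (x ^ ⌊τ a⌋) ≤ f a then ⌊τ a⌋ else ⌊τ a⌋ - 1 with hρdef
  have hρbound : ∀ a : A, τ a - 2 ≤ (ρ a : ℝ) ∧ (ρ a : ℝ) ≤ τ a := by
    intro a
    have h1 := Int.floor_le (τ a)
    have h2 := Int.sub_one_lt_floor (τ a)
    by_cases h : f (x ^ ⌊τ a⌋) ≤ f a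
    · rw [hρdef]; simp only [if_pos h]
      clear h
      constructor <;> linarith
    · rw [hρdef]; simp only [if_neg h]
      clear h
      push_cast
      constructor <;> linarith
  -- the four pieces of IsPosCone
  have pc1 : ∀ a ∈ P, ∀ b ∈ P, a * b ∈ P := by
    intro a ha b hb
    have ha' : (0 : ℝ ×ₗ Lex (Fin m → ℤ)) < f a := ha
    have hb' : (0 : ℝ ×ₗ Lex (Fin m → ℤ)) < f b := hb
    have : (0 : ℝ ×ₗ Lex (Fin m → ℤ)) < f (a * b) := by
      rw [hf_add]; exact add_pos ha' hb'
    exact this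
  have pc2 : ∀ g : A, g ∈ P ∨ g⁻¹ ∈ P ∨ g = 1 := by
    intro g
    rcases lt_trichotomy (0 : ℝ ×ₗ Lex (Fin m → ℤ)) (f g) with h | h | h
    · left; exact h
    · right; right; exact hf_eq_zero g h.symm
    · right; left
      have : (0 : ℝ ×ₗ Lex (Fin m → ℤ)) < f g⁻¹ := by
        rw [hf_inv]; exact neg_pos.2 h
      exact this
  have pc3 : ∀ g : A, g ∈ P → g⁻¹ ∉ P := by
    intro g hg hg'
    have h1 : (0 : ℝ ×ₗ Lex (Fin m → ℤ)) < f g := hg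
    have h2 : (0 : ℝ ×ₗ Lex (Fin m → ℤ)) < f g⁻¹ := hg'
    rw [hf_inv] at h2
    exact lt_asymm h1 (neg_pos.1 h2)
  have pc4 : (1 : A) ∉ P := by
    intro h
    have h1 : (0 : ℝ ×ₗ Lex (Fin m → ℤ)) < f 1 := h
    rw [hf_zero] at h1
    exact lt_irrefl _ h1
  -- cofinality
  have cof : ∀ a : A, ∃ N : ℕ, 1 ≤ N ∧ ltC P (x ^ (-(N : ℤ))) a ∧ ltC P a (x ^ (N : ℤ)) := by
    intro a
    refine ⟨⌈|τ a|⌉₊ + 1, le_add_self, ?_, ?_⟩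
    · rw [hlt]
      apply hmono
      rw [hτpow, hτx]
      push_cast
      nlinarith [neg_abs_le (τ a), Nat.le_ceil |τ a|]
    · rw [hlt]
      apply hmono
      rw [hτpow, hτx]
      push_cast
      nlinarith [le_abs_self (τ a), Nat.le_ceil |τ a|]
  -- positive case
  have posc : ∀ a : A, leC P (x ^ ρ a) a ∧ ltC P a (x ^ (ρ a + 1)) := by
    intro a
    have hfloor := Int.floor_le (τ a)
    have hfloor2 := Int.lt_floor_add_one (τ a)
    by_cases h : f (x ^ ⌊τ a⌋) ≤ f a
    · have hρa : ρ a = ⌊τ a⌋ := by rw [hρdef]; simp only [if_pos h]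
      constructor
      · rcases lt_or_eq_of_le h with h' | h'
        · exact Or.inl (by rw [hρa, hlt]; exact h')
        · exact Or.inr (by rw [hρa]; exact hf_inj _ _ h')
      · rw [hlt]
        apply hmono
        rw [hτpow, hτx, hρa]
        push_cast
        linarith
    · have hρa : ρ a = ⌊τ a⌋ - 1 := by rw [hρdef]; simp only [if_neg h]
      have h2 : f a < f (x ^ ⌊τ a⌋) := by rw [← not_le]; exact h
      clear h
      constructor
      · refine Or.inl ?_
        rw [hρa, hlt]
        apply hmono
        rw [hτpow, hτx]
        push_cast
        linarith
      · rw [hρa, sub_add_cancel, hlt]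
        exact h2
  -- x is positive
  have hxpos : ¬ ltC P x 1 := by
    intro h
    have h1 : f x < f 1 := (hlt x 1).1 h
    have h2 : f 1 < f x := hmono 1 x (by rw [hτ1, hτx]; norm_num)
    exact lt_asymm h1 h2
  -- limit
  have lim : ∀ a : A, Tendsto (fun N : ℕ => (ρ (a ^ N) : ℝ) / N) atTop (𝓝 (τ a)) := by
    intro a
    have hupper : ∀ᶠ N : ℕ in atTop, (ρ (a ^ N) : ℝ) / N ≤ τ a := by
      filter_upwards [eventually_ge_atTop 1] with N hN
      have hNpos : (0 : ℝ) < N := by exact_mod_cast hN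
      rw [div_le_iff₀ hNpos]
      have := (hρbound (a ^ N)).2
      rw [hτpowN] at this
      linarith
    have hlower : ∀ᶠ N : ℕ in atTop, τ a - 2 / N ≤ (ρ (a ^ N) : ℝ) / N := by
      filter_upwards [eventually_ge_atTop 1] with N hN
      have hNpos : (0 : ℝ) < N := by exact_mod_cast hN
      rw [sub_le_iff_le_add, ← add_div, le_div_iff₀ hNpos]
      have := (hρbound (a ^ N)).1
      rw [hτpowN] at this
      linarith
    have h1 : Tendsto (fun N : ℕ => τ a - 2 / N) atTop (𝓝 (τ a)) := by
      have h2 : Tendsto (fun N : ℕ => (2 : ℝ) / N) atTop (𝓝 0) :=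
        tendsto_const_div_atTop_nhds_zero_nat 2
      simpa using tendsto_const_nhds.sub h2
    exact tendsto_of_tendsto_of_tendsto_of_le_of_le' h1 tendsto_const_nhds hlower hupper
  exact ⟨P, ρ, ⟨pc1, pc2, pc3, pc4⟩, cof, fun _ => posc, fun h => absurd h hxpos, lim⟩
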